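/- Let R be a solid invertible (d+1)×(d+1) matrix over F, and let H, K be invertible diagonal (d+1)×(d+1) matrices. Then H R K is normalized if and only if H_{rr} = 1/(R_{r,0} K_{0,0}) and K_{rr} = (R^{-1})_{r,0} K_{0,0} / (R^{-1})_{0,0} for all 0 ≤ r ≤ d. -/

import Mathlib

open Matrix

/-- An invertible matrix is *solid* whenever all entries in row 0 and column 0
of both the matrix and its inverse are nonzero. -/
def Solid {F : Type} [Field F] {d : ℕ} (R : Matrix (Fin (d+1)) (Fin (d+1)) F) : Prop :=
  IsUnit R ∧ (∀ i, R i 0 ≠ 0) ∧ (∀ j, R 0 j ≠ 0) ∧ (∀ i, R⁻¹ i 0 ≠ 0) ∧ (∀ j, R⁻¹ 0 j ≠ 0)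

/-- Matrices `S`, `T` are *diagonally equivalent* whenever `T = H * S * K` for some
invertible diagonal matrices `H`, `K`. -/
def DiagEquiv {F : Type} [Field F] {d : ℕ} (S T : Matrix (Fin (d+1)) (Fin (d+1)) F) : Prop :=
  ∃ H K : Matrix (Fin (d+1)) (Fin (d+1)) F,
    H.IsDiag ∧ IsUnit H ∧ K.IsDiag ∧ IsUnit K ∧ T = H * S * K

/-- A matrix is *normalized* whenever all entries of its column 0 equal 1, and all
entries of column 0 of its inverse are equal to each other. -/
def Normalized {F : Type} [Field F] {d : ℕ} (S : Matrix (Fin (d+1)) (Fin (d+1)) F) : Prop :=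
  (∀ i, S i 0 = 1) ∧ (∀ i, S⁻¹ i 0 = S⁻¹ 0 0)

theorem stmt11 {F : Type} [Field F] (d : ℕ)
    (R H K : Matrix (Fin (d+1)) (Fin (d+1)) F) (hR : Solid R)
    (hH : H.IsDiag) (hHu : IsUnit H) (hK : K.IsDiag) (hKu : IsUnit K) :
    Normalized (H * R * K) ↔
      ∀ r : Fin (d+1),
        H r r = (R r 0 * K 0 0)⁻¹ ∧
        K r r = R⁻¹ r 0 * K 0 0 / R⁻¹ 0 0 := by
  obtain ⟨hRu, hRc0, hRr0, hRic0, hRir0⟩ := hR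
  have hHd := hH.diagonal_diag
  have hKd := hK.diagonal_diag
  have hHne : ∀ i, H i i ≠ 0 := by
    have h1 : IsUnit (Matrix.diagonal H.diag) := by rw [hHd]; exact hHu
    rw [Matrix.isUnit_iff_isUnit_det, Matrix.det_diagonal, isUnit_iff_ne_zero,
      Finset.prod_ne_zero_iff] at h1
    exact fun i => h1 i (Finset.mem_univ i)
  have hKne : ∀ i, K i i ≠ 0 := by
    have h1 : IsUnit (Matrix.diagonal K.diag) := by rw [hKd]; exact hKu
    rw [Matrix.isUnit_iff_isUnit_det, Matrix.det_diagonal, isUnit_iff_ne_zero,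
      Finset.prod_ne_zero_iff] at h1
    exact fun i => h1 i (Finset.mem_univ i)
  have hHinv : H⁻¹ = Matrix.diagonal (fun i => (H i i)⁻¹) := by
    apply Matrix.inv_eq_right_inv
    conv_lhs => rw [← hHd]
    rw [Matrix.diagonal_mul_diagonal]
    convert Matrix.diagonal_one using 2
    funext i
    simp [Matrix.diag, mul_inv_cancel₀ (hHne i)]
  have hKinv : K⁻¹ = Matrix.diagonal (fun i => (K i i)⁻¹) := by
    apply Matrix.inv_eq_right_inv
    conv_lhs => rw [← hKd]
    rw [Matrix.diagonal_mul_diagonal]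
    convert Matrix.diagonal_one using 2
    funext i
    simp [Matrix.diag, mul_inv_cancel₀ (hKne i)]
  have hS : ∀ i, (H * R * K) i 0 = H i i * R i 0 * K 0 0 := by
    intro i
    conv_lhs => rw [← hHd, ← hKd]
    simp [Matrix.mul_diagonal, Matrix.diagonal_mul, Matrix.diag]
  have hSi : ∀ i, (H * R * K)⁻¹ i 0 = (K i i)⁻¹ * R⁻¹ i 0 * (H 0 0)⁻¹ := by
    intro i
    rw [Matrix.mul_inv_rev, Matrix.mul_inv_rev, hHinv, hKinv]
    simp [Matrix.mul_diagonal, Matrix.diagonal_mul]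
    ring
  have hRi00 : R⁻¹ 0 0 ≠ 0 := hRic0 0
  constructor
  · rintro ⟨h1, h2⟩
    intro r
    have e1 : H r r * (R r 0 * K 0 0) = 1 := by rw [← mul_assoc, ← hS r]; exact h1 r
    have e2 : (K r r)⁻¹ * R⁻¹ r 0 * (H 0 0)⁻¹ = (K 0 0)⁻¹ * R⁻¹ 0 0 * (H 0 0)⁻¹ := by
      rw [← hSi r, ← hSi 0]; exact h2 r
    refine ⟨eq_inv_of_mul_eq_one_right (by linear_combination e1), ?_⟩
    have e2' : (K r r)⁻¹ * R⁻¹ r 0 = (K 0 0)⁻¹ * R⁻¹ 0 0 :=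
      mul_right_cancel₀ (inv_ne_zero (hHne 0)) e2
    set a := R⁻¹ r 0 with ha'
    set b := R⁻¹ 0 0 with hb'
    have ha : a ≠ 0 := hRic0 r
    have hb : b ≠ 0 := hRi00
    rw [eq_div_iff hb]
    field_simp at e2'
    rw [div_eq_div_iff (hKne r) (hKne 0)] at e2'
    linear_combination -e2'
  · intro hall
    constructor
    · intro i
      obtain ⟨e1, _⟩ := hall i
      rw [hS i, e1, mul_assoc, inv_mul_cancel₀ (mul_ne_zero (hRc0 i) (hKne 0))]
    · intro i
      obtain ⟨_, e2⟩ := hall i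
      rw [hSi i, hSi 0, e2]
      set a := R⁻¹ i 0 with ha'
      set b := R⁻¹ 0 0 with hb'
      have ha : a ≠ 0 := hRic0 i
      have hb : b ≠ 0 := hRi00
      congr 1
      field_simp
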